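/- In a finite directed graph with edge costs in (0,∞)^M and M ≥ 1, for any fixed vector g* ∈ ℝ^M, the set of paths π from a fixed start vertex with cost(π) not ≥ g* componentwise is finite, where cost is the componentwise sum of edge costs along the path. -/

import Mathlib

/-- Cost of a path (list of vertices): componentwise sum of edge costs along it. -/
def pathCost {V : Type*} {M : ℕ} (c : V → V → Fin M → ℝ) : List V → (Fin M → ℝ)
  | [] => 0
  | [_] => 0
  | u :: v :: rest => c u v + pathCost c (v :: rest)

theorem finite_paths_not_ge {V : Type*} [Fintype V] {M : ℕ} (hM : 1 ≤ M)
    (E : V → V → Prop) (c : V → V → Fin M → ℝ)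
    (hc : ∀ u v, E u v → ∀ m, 0 < c u v m) (s : V) (gstar : Fin M → ℝ) :
    {l : List V | l.head? = some s ∧ l.Chain' E ∧
      ¬ (∀ m, gstar m ≤ pathCost c l m)}.Finite := by
  classical
  haveI : NeZero M := ⟨by omega⟩
  -- a modified cost that is positive everywhere
  set c' : V → V → Fin M → ℝ := fun u v m => if E u v then c u v m else 1 with hc'
  have hc'pos : ∀ u v m, 0 < c' u v m := by
    intro u v m
    by_cases h : E u v <;> simp [hc', h]
    exact hc u v h m
  have hne : (Finset.univ : Finset (V × V × Fin M)).Nonempty ∨ IsEmpty V := by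
    rcases isEmpty_or_nonempty V with h | h
    · exact Or.inr h
    · exact Or.inl ⟨⟨h.some, h.some, ⟨0, by omega⟩⟩, Finset.mem_univ _⟩
  rcases hne with hne | hV
  swap
  · exact (Set.finite_singleton ([] : List V)).subset (by
      rintro l ⟨h1, -, -⟩
      cases l with
      | nil => rfl
      | cons a t => exact (hV.false a).elim)
  set ε : ℝ := Finset.inf' Finset.univ hne (fun p => c' p.1 p.2.1 p.2.2) with hε
  have hεpos : 0 < ε := by
    rw [hε, Finset.lt_inf'_iff]
    exact fun p _ => hc'pos _ _ _
  have hεle : ∀ u v m, E u v → ε ≤ c u v m := by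
    intro u v m h
    have h0 : ε ≤ c' u v m := Finset.inf'_le _ (Finset.mem_univ (u, v, m))
    simpa only [hc', if_pos h] using h0
  -- lower bound for path costs
  have key : ∀ l : List V, l.Chain' E → ∀ m, ((l.length - 1 : ℕ) : ℝ) * ε ≤ pathCost c l m := by
    intro l
    induction l with
    | nil => intro _ m; simp [pathCost]
    | cons u t ih =>
      cases t with
      | nil => intro _ m; simp [pathCost]
      | cons v rest =>
        intro hch m
        rw [List.Chain', List.isChain_cons_cons] at hch
        have h1 := ih hch.2 m
        have h2 := hεle u v m hch.1
        have hlen : (((u :: v :: rest).length - 1 : ℕ) : ℝ)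
            = (((v :: rest).length - 1 : ℕ) : ℝ) + 1 := by
          simp
        rw [hlen]
        have : (((v :: rest).length - 1 : ℕ) : ℝ) * ε + 1 * ε ≤ pathCost c (v :: rest) m + c u v m := by
          gcongr
          linarith
        calc ((((v :: rest).length - 1 : ℕ) : ℝ) + 1) * ε
            = (((v :: rest).length - 1 : ℕ) : ℝ) * ε + 1 * ε := by ring
          _ ≤ pathCost c (v :: rest) m + c u v m := this
          _ = pathCost c (u :: v :: rest) m := by simp [pathCost]; ring
  -- bound gstar
  obtain ⟨G, hG⟩ : ∃ G : ℝ, ∀ m, gstar m ≤ G := by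
    refine ⟨Finset.sup' Finset.univ ⟨⟨0, by omega⟩, Finset.mem_univ _⟩ gstar, fun m => ?_⟩
    exact Finset.le_sup' _ (Finset.mem_univ m)
  obtain ⟨N, hN⟩ := exists_nat_ge (G / ε)
  refine (List.finite_length_le V (N + 1)).subset ?_
  rintro l ⟨-, hch, hlt⟩
  by_contra hlen
  simp only [Set.mem_setOf_eq, not_le] at hlen
  apply hlt
  intro m
  have h1 := key l hch m
  have hNle : (N : ℝ) ≤ ((l.length - 1 : ℕ) : ℝ) := by
    have : N ≤ l.length - 1 := by omega
    exact_mod_cast this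
  have : G ≤ ((l.length - 1 : ℕ) : ℝ) * ε := by
    have hG2 : G ≤ N * ε := by
      rw [div_le_iff₀ hεpos] at hN
      linarith
    calc G ≤ N * ε := hG2
      _ ≤ ((l.length - 1 : ℕ) : ℝ) * ε := by gcongr
  linarith [hG m]
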